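/- Let φ be a self-map of T such that C_φ is a bounded operator on L⁰μ(T). If φ is surjective and μ(φ(v)) ≤ μ(v) for every v ∈ T, then C_φ is not hypercyclic on L⁰μ(T). -/

import Mathlib

open Filter Set Topology

/-- The weighted sup-norm `‖f‖_μ = sup_{v ∈ T} μ(v) |f(v)|`. -/
noncomputable def wnorm {T : Type*} (μ : T → ℝ) (f : T → ℂ) : ℝ :=
  ⨆ v : T, μ v * ‖f v‖

/-- Membership in the weighted Banach space `Lμ(T)`: `sup_{v} μ(v)|f(v)| < ∞`. -/
def memL {T : Type*} (μ : T → ℝ) (f : T → ℂ) : Prop :=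
  BddAbove (Set.range fun v : T => μ v * ‖f v‖)

/-- Membership in the little weighted Banach space `L⁰μ(T)`:
`f ∈ Lμ(T)` and `μ(v)|f(v)| → 0` as `|v| = d(o,v) → ∞`. -/
def memL0 {T : Type*} [MetricSpace T] (o : T) (μ : T → ℝ) (f : T → ℂ) : Prop :=
  memL μ f ∧ ∀ ε : ℝ, 0 < ε → ∃ N : ℝ, ∀ v : T, N ≤ dist o v → μ v * ‖f v‖ < ε

/-- `C_φ` maps `L⁰μ(T)` boundedly into `L⁰μ(T)`. -/
def CompBoundedL0 {T : Type*} [MetricSpace T] (o : T) (μ : T → ℝ) (φ : T → T) : Prop :=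
  (∀ f : T → ℂ, memL0 o μ f → memL0 o μ (f ∘ φ)) ∧
    ∃ C : ℝ, ∀ f : T → ℂ, memL0 o μ f → wnorm μ (f ∘ φ) ≤ C * wnorm μ f

lemma memL0_iter {T : Type*} [MetricSpace T] (o : T) (μ : T → ℝ) (φ : T → T)
    (h : ∀ f : T → ℂ, memL0 o μ f → memL0 o μ (f ∘ φ))
    (f : T → ℂ) (hf : memL0 o μ f) (n : ℕ) : memL0 o μ (f ∘ φ^[n]) := by
  induction n with
  | zero => simpa using hf
  | succ n ih =>
      have := h _ ih
      simpa [Function.comp_assoc, Function.iterate_succ] using this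

lemma mu_iter_le {T : Type*} (μ : T → ℝ) (φ : T → T) (hdec : ∀ v : T, μ (φ v) ≤ μ v)
    (n : ℕ) (v : T) : μ (φ^[n] v) ≤ μ v := by
  induction n with
  | zero => simp
  | succ n ih =>
      rw [Function.iterate_succ_apply']
      exact le_trans (hdec _) ih

/-- Suppose `C_φ` is a bounded operator on `L⁰μ(T)`. If `φ` is surjective
and `μ(φ(v)) ≤ μ(v)` for every `v ∈ T`, then `C_φ` is not hypercyclic on `L⁰μ(T)`:
no `f ∈ L⁰μ(T)` has a `C_φ`-orbit `{f ∘ φⁿ : n ∈ ℕ₀}` that is dense in `L⁰μ(T)`. -/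
theorem stmt_17 {T : Type*} [MetricSpace T] (o : T)
    (hloc : ∀ M : ℝ, {v : T | dist o v ≤ M}.Finite)
    (hunb : ∀ M : ℝ, ∃ v : T, M < dist o v)
    (μ : T → ℝ) (hμ : ∀ v : T, 0 < μ v) (φ : T → T)
    (hb : CompBoundedL0 o μ φ)
    (hsurj : Function.Surjective φ)
    (hdec : ∀ v : T, μ (φ v) ≤ μ v) :
    ¬ ∃ f : T → ℂ, memL0 o μ f ∧
        ∀ g : T → ℂ, memL0 o μ g → ∀ ε : ℝ, 0 < ε →
          ∃ n : ℕ, wnorm μ (fun v => f (φ^[n] v) - g v) < ε := by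
  classical
  rintro ⟨f, hf, hdense⟩
  -- zero function is in L⁰
  have h0 : memL0 o μ (0 : T → ℂ) := by
    refine ⟨⟨0, ?_⟩, fun ε hε => ⟨0, fun v _ => by simpa using hε⟩⟩
    rintro x ⟨v, rfl⟩
    simp
  -- Step 1: f ≡ 0
  have hf0 : ∀ w : T, f w = 0 := by
    intro w
    have key : ∀ ε : ℝ, 0 < ε → μ w * ‖f w‖ < ε := by
      intro ε hε
      obtain ⟨n, hn⟩ := hdense 0 h0 ε hε
      -- φ^[n] surjective
      obtain ⟨v, hv⟩ := (Function.Surjective.iterate hsurj n) w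
      have hmem := memL0_iter o μ φ hb.1 f hf n
      have hbdd : BddAbove (Set.range fun u : T => μ u * ‖f (φ^[n] u) - (0 : T → ℂ) u‖) := by
        simpa [memL, Function.comp] using hmem.1
      have hle : μ v * ‖f (φ^[n] v) - (0 : T → ℂ) v‖ ≤
          wnorm μ (fun u => f (φ^[n] u) - (0 : T → ℂ) u) :=
        le_ciSup hbdd v
      have h1 : μ v * ‖f w‖ < ε := by
        have := lt_of_le_of_lt hle hn
        simpa [hv] using this
      have h2 : μ w ≤ μ v := by
        have := mu_iter_le μ φ hdec n v
        rwa [hv] at this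
      calc μ w * ‖f w‖ ≤ μ v * ‖f w‖ := by
            exact mul_le_mul_of_nonneg_right h2 (norm_nonneg _)
        _ < ε := h1
    by_contra hne
    have hpos : 0 < μ w * ‖f w‖ :=
      mul_pos (hμ w) (norm_pos_iff.mpr hne)
    exact absurd (key _ hpos) (lt_irrefl _)
  -- Step 2: the bump at o cannot be approximated
  set c : ℂ := ((((μ o)⁻¹ : ℝ)) : ℂ)
  set g : T → ℂ := fun v => if v = o then c else 0 with hg
  have hco : μ o * ‖c‖ = 1 := by
    have : ‖c‖ = (μ o)⁻¹ := by
      simp [c, abs_of_pos (inv_pos.mpr (hμ o)), (hμ o).le]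
    rw [this]
    exact mul_inv_cancel₀ (hμ o).ne'
  have hgmem : memL0 o μ g := by
    constructor
    · refine ⟨1, ?_⟩
      rintro x ⟨v, rfl⟩
      by_cases hvo : v = o
      · simpa [g, hvo] using hco.le
      · simp [g, hvo]
    · intro ε hε
      refine ⟨1, fun v hv => ?_⟩
      have hvo : v ≠ o := by
        intro h; rw [h] at hv; simp at hv; linarith
      simp [g, hvo, hε]
  obtain ⟨n, hn⟩ := hdense g hgmem (1/2) (by norm_num)
  have hbdd : BddAbove (Set.range fun u : T => μ u * ‖f (φ^[n] u) - g u‖) := by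
    refine ⟨1, ?_⟩
    rintro x ⟨v, rfl⟩
    by_cases hvo : v = o
    · simpa [hf0, g, hvo] using hco.le
    · simp [hf0, g, hvo]
  have hle : μ o * ‖f (φ^[n] o) - g o‖ ≤ wnorm μ (fun u => f (φ^[n] u) - g u) :=
    le_ciSup hbdd o
  have : (1 : ℝ) < 1/2 := by
    have h1 : μ o * ‖f (φ^[n] o) - g o‖ = 1 := by
      simpa [hf0, g] using hco
    calc (1:ℝ) = μ o * ‖f (φ^[n] o) - g o‖ := h1.symm
      _ ≤ _ := hle
      _ < 1/2 := hn
  linarith
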